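/- arXiv:2301.11291 — 2 statements merged into one kernel-verified Lean document; each statement's English description precedes it below -/
import Mathlib

section
/- A quantum model S = (H_A, H_B, {M^x_a}, {N^y_b}, |ψ⟩) is centrally supported if and only if for every a ∈ A and x ∈ X there exists an operator M̂^x_a ∈ B(H_B) with (M^x_a ⊗ Id)|ψ⟩ = (Id ⊗ M̂^x_a)|ψ⟩, and for every b ∈ B and y ∈ Y there exists an operator N̂^y_b ∈ B(H_A) with (Id ⊗ N^y_b)|ψ⟩ = (N̂^y_b ⊗ Id)|ψ⟩. -/
open scoped Matrix Kronecker ComplexOrder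

noncomputable section

namespace SelfTestPaper

/-- A finite-dimensional (POVM) quantum model for a bipartite Bell scenario:
Hilbert spaces `ℂ^dA`, `ℂ^dB`, POVMs `{M x a}` and `{N y b}`, and a unit vector `ψ`. -/
structure QModel (X Y A B : Type) [Fintype A] [Fintype B] where
  dA : ℕ
  dB : ℕ
  M : X → A → Matrix (Fin dA) (Fin dA) ℂ
  N : Y → B → Matrix (Fin dB) (Fin dB) ℂ
  ψ : Fin dA × Fin dB → ℂ
  M_pos : ∀ x a, (M x a).PosSemidef
  M_sum : ∀ x, ∑ a, M x a = 1
  N_pos : ∀ y b, (N y b).PosSemidef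
  N_sum : ∀ y, ∑ b, N y b = 1
  ψ_unit : ∑ i, star (ψ i) * ψ i = 1

variable {X Y A B : Type} [Fintype A] [Fintype B]

/-- Inner product `⟨v, w⟩` (antilinear in the first argument). -/
def qInner {n : Type} [Fintype n] (v w : n → ℂ) : ℂ := ∑ i, star (v i) * w i

/-- The model `S` realizes the correlation `p`:
`p(a,b|x,y) = ⟨ψ|(M^x_a ⊗ N^y_b)|ψ⟩`. -/
def Realizes (S : QModel X Y A B) (p : A → B → X → Y → ℝ) : Prop :=
  ∀ a b x y, qInner S.ψ ((S.M x a ⊗ₖ S.N y b).mulVec S.ψ) = (p a b x y : ℂ)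

/-- The set `C_q(X,Y,A,B)` of quantum correlations. -/
def CqSet (X Y A B : Type) [Fintype A] [Fintype B] : Set (A → B → X → Y → ℝ) :=
  {p | ∃ S : QModel X Y A B, Realizes S p}

/-- `Dilates S St` means `S ⪰ St`, i.e. `St` is a local dilation of `S`:
there are auxiliary spaces, a unit auxiliary state and local isometries `IA`, `IB` with
`(IA ⊗ IB)(M^x_a ⊗ N^y_b)|ψ⟩ = (M̃^x_a ⊗ Ñ^y_b |ψ̃⟩) ⊗ |aux⟩` (written pointwise, under the
identification `(H̃_A ⊗ H_A^aux) ⊗ (H̃_B ⊗ H_B^aux) ≅ (H̃_A ⊗ H̃_B) ⊗ (H_A^aux ⊗ H_B^aux)`). -/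
def Dilates (S St : QModel X Y A B) : Prop :=
  ∃ (eA eB : ℕ) (aux : Fin eA × Fin eB → ℂ)
    (IA : Matrix (Fin St.dA × Fin eA) (Fin S.dA) ℂ)
    (IB : Matrix (Fin St.dB × Fin eB) (Fin S.dB) ℂ),
    IAᴴ * IA = 1 ∧ IBᴴ * IB = 1 ∧ (∑ i, star (aux i) * aux i) = 1 ∧
    ∀ (x : X) (a : A) (y : Y) (b : B) (i : Fin St.dA) (k : Fin eA) (j : Fin St.dB) (l : Fin eB),
      ((IA ⊗ₖ IB).mulVec ((S.M x a ⊗ₖ S.N y b).mulVec S.ψ)) ((i, k), (j, l))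
        = ((St.M x a ⊗ₖ St.N y b).mulVec St.ψ) (i, j) * aux (k, l)

/-- `p` is a self-test for the class `C`: some ideal model in `C` realizes `p` and is a
local dilation of every model for `p` in `C`. -/
def SelfTestFor (C : Set (QModel X Y A B)) (p : A → B → X → Y → ℝ) : Prop :=
  ∃ St ∈ C, Realizes St p ∧ ∀ S ∈ C, Realizes S p → Dilates S St

/-- Word value `⟨ψ| M^{x₁}_{a₁} ⋯ M^{x_k}_{a_k} ⊗ N^{y₁}_{b₁} ⋯ N^{y_ℓ}_{b_ℓ} |ψ⟩`. -/
def wordValue (S : QModel X Y A B) (wA : List (X × A)) (wB : List (Y × B)) : ℂ :=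
  qInner S.ψ ((((wA.map fun q => S.M q.1 q.2).prod) ⊗ₖ
    ((wB.map fun q => S.N q.1 q.2).prod)).mulVec S.ψ)

/-- `S` and `S'` define the same abstract state: all their word values coincide. -/
def SameState (S S' : QModel X Y A B) : Prop :=
  ∀ wA wB, wordValue S wA wB = wordValue S' wA wB

/-- Reduced density matrix of `ψ` on the first tensor factor. -/
def redA {m n : ℕ} (ψ : Fin m × Fin n → ℂ) : Matrix (Fin m) (Fin m) ℂ :=
  Matrix.of fun i i' => ∑ j, ψ (i, j) * star (ψ (i', j))

/-- Reduced density matrix of `ψ` on the second tensor factor. -/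
def redB {m n : ℕ} (ψ : Fin m × Fin n → ℂ) : Matrix (Fin n) (Fin n) ℂ :=
  Matrix.of fun j j' => ∑ i, ψ (i, j) * star (ψ (i, j'))

/-- `P` is the orthogonal projection onto the range (support) of the positive
semidefinite matrix `ρ`. -/
def IsSupportProjection {n : Type} [Fintype n] [DecidableEq n] (ρ P : Matrix n n ℂ) : Prop :=
  P.IsHermitian ∧ P * P = P ∧ P * ρ = ρ ∧ ∀ v, ρ.mulVec v = 0 → P.mulVec v = 0

/-- `S` is centrally supported: the support projections of `ψ` commute with all
measurement operators. -/
def CentrallySupported (S : QModel X Y A B) : Prop :=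
  ∃ PA PB, IsSupportProjection (redA S.ψ) PA ∧ IsSupportProjection (redB S.ψ) PB ∧
    (∀ x a, PA * S.M x a = S.M x a * PA) ∧ (∀ y b, PB * S.N y b = S.N y b * PB)

/-- `S` is full-rank: both support projections of `ψ` are the identity, i.e. the reduced
density matrices have trivial kernel. -/
def FullRank (S : QModel X Y A B) : Prop :=
  (∀ v, (redA S.ψ).mulVec v = 0 → v = 0) ∧ (∀ v, (redB S.ψ).mulVec v = 0 → v = 0)

/-- `S` is projective: all measurement operators are self-adjoint projections. -/
def Projective (S : QModel X Y A B) : Prop :=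
  (∀ x a, (S.M x a).IsHermitian ∧ S.M x a * S.M x a = S.M x a) ∧
  (∀ y b, (S.N y b).IsHermitian ∧ S.N y b * S.N y b = S.N y b)

/-- `St` is locally equivalent to a submodel of `S`, expressed via local isometries
`VA`, `VB` whose range projections `VA * VAᴴ`, `VB * VBᴴ` commute with the measurements. -/
def EquivToSubmodel (S St : QModel X Y A B) : Prop :=
  ∃ (VA : Matrix (Fin S.dA) (Fin St.dA) ℂ) (VB : Matrix (Fin S.dB) (Fin St.dB) ℂ) (lam : ℂ),
    lam ≠ 0 ∧ VAᴴ * VA = 1 ∧ VBᴴ * VB = 1 ∧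
    (∀ x a, (VA * VAᴴ) * S.M x a = S.M x a * (VA * VAᴴ)) ∧
    (∀ y b, (VB * VBᴴ) * S.N y b = S.N y b * (VB * VBᴴ)) ∧
    (∀ x a, St.M x a = VAᴴ * S.M x a * VA) ∧
    (∀ y b, St.N y b = VBᴴ * S.N y b * VB) ∧
    (VAᴴ ⊗ₖ VBᴴ).mulVec S.ψ = lam • St.ψ

/-- A class of models is closed if it is closed under passing to models locally
equivalent to submodels. -/
def ClosedClass (C : Set (QModel X Y A B)) : Prop :=
  ∀ S ∈ C, ∀ St, EquivToSubmodel S St → St ∈ C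

/-- `p` is an abstract state self-test for `C`: `C` contains a model for `p`, and any two
models for `p` in `C` define the same abstract state. -/
def AbstractSelfTestFor (C : Set (QModel X Y A B)) (p : A → B → X → Y → ℝ) : Prop :=
  (∃ S ∈ C, Realizes S p) ∧
  ∀ S ∈ C, ∀ S' ∈ C, Realizes S p → Realizes S' p → SameState S S'

/-- `Sp` is the support model of `S`, presented via isometries `VA`, `VB` onto the
supports of `ψ` (so `VA * VAᴴ`, `VB * VBᴴ` are the support projections). -/
def IsSupportModel (S Sp : QModel X Y A B) : Prop :=
  ∃ (VA : Matrix (Fin S.dA) (Fin Sp.dA) ℂ) (VB : Matrix (Fin S.dB) (Fin Sp.dB) ℂ),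
    VAᴴ * VA = 1 ∧ VBᴴ * VB = 1 ∧
    IsSupportProjection (redA S.ψ) (VA * VAᴴ) ∧
    IsSupportProjection (redB S.ψ) (VB * VBᴴ) ∧
    (∀ x a, Sp.M x a = VAᴴ * S.M x a * VA) ∧
    (∀ y b, Sp.N y b = VBᴴ * S.N y b * VB) ∧
    (VAᴴ ⊗ₖ VBᴴ).mulVec S.ψ = Sp.ψ

/-- The associated representation of `S` is irreducible: every matrix commuting with all
`M^x_a ⊗ Id` and `Id ⊗ N^y_b` is a scalar multiple of the identity. -/
def IrreducibleModel (S : QModel X Y A B) : Prop :=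
  ∀ T : Matrix (Fin S.dA × Fin S.dB) (Fin S.dA × Fin S.dB) ℂ,
    (∀ x a, T * (S.M x a ⊗ₖ (1 : Matrix (Fin S.dB) (Fin S.dB) ℂ))
      = (S.M x a ⊗ₖ (1 : Matrix (Fin S.dB) (Fin S.dB) ℂ)) * T) →
    (∀ y b, T * ((1 : Matrix (Fin S.dA) (Fin S.dA) ℂ) ⊗ₖ S.N y b)
      = ((1 : Matrix (Fin S.dA) (Fin S.dA) ℂ) ⊗ₖ S.N y b) * T) →
    ∃ c : ℂ, T = c • (1 : Matrix (Fin S.dA × Fin S.dB) (Fin S.dA × Fin S.dB) ℂ)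



section Aux
variable {m n : ℕ}

variable {m n : ℕ}

/-- mulVec extensionality -/
lemma ext_of_mulVec {A B : Matrix (Fin m) (Fin n) ℂ}
    (h : ∀ v, A *ᵥ v = B *ᵥ v) : A = B := by
  ext i j
  have := congrFun (h (Pi.single j 1)) i
  simpa using this

/-- A * Aᴴ = 0 → A = 0 -/
lemma eq_zero_of_mul_conjTranspose_self {A : Matrix (Fin m) (Fin n) ℂ}
    (h : A * Aᴴ = 0) : A = 0 := by
  ext i j
  have h1 : (A * Aᴴ) i i = 0 := by rw [h]; rfl
  rw [Matrix.mul_apply] at h1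
  simp only [Matrix.conjTranspose_apply] at h1
  have h2 : ∀ k, A i k * star (A i k) = (Complex.normSq (A i k) : ℂ) := by
    intro k; rw [Complex.star_def, Complex.mul_conj]
  rw [Finset.sum_congr rfl (fun k _ => h2 k)] at h1
  rw [← Complex.ofReal_sum] at h1
  have h3 : ∑ k, Complex.normSq (A i k) = 0 := by exact_mod_cast h1
  have h4 : ∀ k ∈ Finset.univ, Complex.normSq (A i k) = 0 :=
    (Finset.sum_eq_zero_iff_of_nonneg (fun k _ => Complex.normSq_nonneg _)).mp h3
  have := h4 j (Finset.mem_univ j)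
  simpa using Complex.normSq_eq_zero.mp this

lemma conjT_mulVec_eq_zero {Ψ : Matrix (Fin m) (Fin n) ℂ} {v : Fin m → ℂ}
    (h : (Ψ * Ψᴴ) *ᵥ v = 0) : Ψᴴ *ᵥ v = 0 := by
  set u := Ψᴴ *ᵥ v with hu
  have key : star u ⬝ᵥ u = 0 := by
    have h1 : star v ⬝ᵥ ((Ψ * Ψᴴ) *ᵥ v) = 0 := by rw [h]; simp
    rw [← Matrix.mulVec_mulVec] at h1
    rw [Matrix.dotProduct_mulVec] at h1
    have h2 : star u = star v ᵥ* Ψ := by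
      rw [hu, Matrix.star_mulVec, Matrix.conjTranspose_conjTranspose]
    rw [h2]; exact h1
  have h3 : ∑ j, Complex.normSq (u j) = 0 := by
    have : star u ⬝ᵥ u = ((∑ j, Complex.normSq (u j) : ℝ) : ℂ) := by
      rw [Complex.ofReal_sum, dotProduct]
      apply Finset.sum_congr rfl
      intro k _
      simp [Complex.star_def, Complex.normSq_eq_conj_mul_self]
    rw [this] at key; exact_mod_cast key
  funext j
  have h4 := (Finset.sum_eq_zero_iff_of_nonneg (fun k _ => Complex.normSq_nonneg _)).mp h3 j (Finset.mem_univ j)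
  simpa using Complex.normSq_eq_zero.mp h4

def colSpace (Ψ : Matrix (Fin m) (Fin n) ℂ) : Submodule ℂ (EuclideanSpace ℂ (Fin m)) :=
  LinearMap.range (Matrix.toEuclideanLin Ψ)

lemma mem_colSpace {Ψ : Matrix (Fin m) (Fin n) ℂ} {x : EuclideanSpace ℂ (Fin m)} :
    x ∈ colSpace Ψ ↔ ∃ w : Fin n → ℂ, Ψ *ᵥ w = (x : Fin m → ℂ) := by
  constructor
  · rintro ⟨w, rfl⟩
    exact ⟨(WithLp.equiv 2 (Fin n → ℂ)) w, rfl⟩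
  · rintro ⟨w, hw⟩
    exact ⟨(WithLp.equiv 2 (Fin n → ℂ)).symm w, (WithLp.equiv 2 _).injective hw⟩

lemma mem_orthogonal_colSpace_iff {Ψ : Matrix (Fin m) (Fin n) ℂ} {x : EuclideanSpace ℂ (Fin m)} :
    x ∈ (colSpace Ψ)ᗮ ↔ Ψᴴ *ᵥ (x : Fin m → ℂ) = 0 := by
  constructor
  · intro hx
    funext j
    have hmem : ((WithLp.equiv 2 (Fin m → ℂ)).symm (Ψ *ᵥ Pi.single j 1) : EuclideanSpace ℂ (Fin m)) ∈ colSpace Ψ :=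
      mem_colSpace.mpr ⟨Pi.single j 1, rfl⟩
    have h0 := hx _ hmem
    rw [PiLp.inner_apply] at h0
    simp only [RCLike.inner_apply] at h0
    have heq : (Ψᴴ *ᵥ (x : Fin m → ℂ)) j
        = ∑ i, x i * (starRingEnd ℂ) ((Ψ *ᵥ Pi.single j 1) i) := by
      simp [Matrix.mulVec, dotProduct, Matrix.conjTranspose_apply, Pi.single_apply, mul_comm]
    show (Ψᴴ *ᵥ (x : Fin m → ℂ)) j = 0
    rw [heq]; exact h0
  · intro hx
    intro u hu
    obtain ⟨w, hw⟩ := mem_colSpace.mp hu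
    rw [PiLp.inner_apply]
    simp only [RCLike.inner_apply]
    have key : ∑ i, (starRingEnd ℂ) (u i) * x i = star w ⬝ᵥ (Ψᴴ *ᵥ (x : Fin m → ℂ)) := by
      calc ∑ i, (starRingEnd ℂ) (u i) * x i = star (u : Fin m → ℂ) ⬝ᵥ (x : Fin m → ℂ) := rfl
        _ = (star w ᵥ* Ψᴴ) ⬝ᵥ (x : Fin m → ℂ) := by
            rw [← hw, Matrix.star_mulVec]
        _ = star w ⬝ᵥ (Ψᴴ *ᵥ (x : Fin m → ℂ)) := (Matrix.dotProduct_mulVec _ _ _).symm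
    have key' : ∑ i, x i * (starRingEnd ℂ) (u i) = ∑ i, (starRingEnd ℂ) (u i) * x i :=
      Finset.sum_congr rfl (fun i _ => mul_comm _ _)
    rw [key', key, hx]
    simp

def suppP (Ψ : Matrix (Fin m) (Fin n) ℂ) : Matrix (Fin m) (Fin m) ℂ :=
  Matrix.toEuclideanLin.symm
    ((colSpace Ψ).subtype ∘ₗ (Submodule.orthogonalProjectionOnto (colSpace Ψ)).toLinearMap)

lemma suppP_mulVec (Ψ : Matrix (Fin m) (Fin n) ℂ) (v : EuclideanSpace ℂ (Fin m)) :
    suppP Ψ *ᵥ (v : Fin m → ℂ)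
      = (Submodule.orthogonalProjectionOnto (colSpace Ψ) v : EuclideanSpace ℂ (Fin m)) := by
  have h := Matrix.toEuclideanLin.apply_symm_apply
    ((colSpace Ψ).subtype ∘ₗ (Submodule.orthogonalProjectionOnto (colSpace Ψ)).toLinearMap)
  have h2 : Matrix.toEuclideanLin (suppP Ψ) v
      = (Submodule.orthogonalProjectionOnto (colSpace Ψ) v : EuclideanSpace ℂ (Fin m)) := by
    rw [suppP, h]; rfl
  exact congrArg WithLp.ofLp h2

lemma suppP_mulVec_mem (Ψ : Matrix (Fin m) (Fin n) ℂ) (v : Fin m → ℂ) :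
    ∃ w, Ψ *ᵥ w = suppP Ψ *ᵥ v := by
  have h := suppP_mulVec Ψ ((WithLp.equiv 2 (Fin m → ℂ)).symm v)
  obtain ⟨w, hw⟩ := mem_colSpace.mp
    (SetLike.coe_mem (Submodule.orthogonalProjectionOnto (colSpace Ψ) ((WithLp.equiv 2 (Fin m → ℂ)).symm v)))
  exact ⟨w, by rw [hw]; exact h.symm⟩

lemma suppP_mulVec_of_mem (Ψ : Matrix (Fin m) (Fin n) ℂ) {w : Fin n → ℂ} :
    suppP Ψ *ᵥ (Ψ *ᵥ w) = Ψ *ᵥ w := by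
  have hmem : ((WithLp.equiv 2 (Fin m → ℂ)).symm (Ψ *ᵥ w) : EuclideanSpace ℂ (Fin m)) ∈ colSpace Ψ :=
    mem_colSpace.mpr ⟨w, rfl⟩
  have h := suppP_mulVec Ψ ((WithLp.equiv 2 (Fin m → ℂ)).symm (Ψ *ᵥ w))
  have h4 := Submodule.starProjection_eq_self_iff.mpr hmem
  exact h.trans (congrArg WithLp.ofLp h4)

lemma suppP_hermitian (Ψ : Matrix (Fin m) (Fin n) ℂ) : (suppP Ψ).IsHermitian := by
  show (suppP Ψ)ᴴ = suppP Ψ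
  ext i j
  rw [Matrix.conjTranspose_apply]
  have hval : ∀ (k l : Fin m), suppP Ψ k l
      = (Submodule.orthogonalProjectionOnto (colSpace Ψ) (EuclideanSpace.single l (1:ℂ)) : EuclideanSpace ℂ (Fin m)) k := by
    intro k l
    have h := congrFun (suppP_mulVec Ψ (EuclideanSpace.single l (1:ℂ))) k
    rw [← h]
    show suppP Ψ k l = (suppP Ψ *ᵥ Pi.single l 1) k
    simp
  rw [hval j i, hval i j]
  have e1 : (Submodule.orthogonalProjectionOnto (colSpace Ψ) (EuclideanSpace.single i (1:ℂ)) : EuclideanSpace ℂ (Fin m)) j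
      = inner (𝕜 := ℂ) (EuclideanSpace.single j (1:ℂ))
          ((Submodule.orthogonalProjectionOnto (colSpace Ψ) (EuclideanSpace.single i (1:ℂ)) : EuclideanSpace ℂ (Fin m))) := by
    rw [EuclideanSpace.inner_single_left]; simp
  have e2 : (Submodule.orthogonalProjectionOnto (colSpace Ψ) (EuclideanSpace.single j (1:ℂ)) : EuclideanSpace ℂ (Fin m)) i
      = inner (𝕜 := ℂ) (EuclideanSpace.single i (1:ℂ))
          ((Submodule.orthogonalProjectionOnto (colSpace Ψ) (EuclideanSpace.single j (1:ℂ)) : EuclideanSpace ℂ (Fin m))) := by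
    rw [EuclideanSpace.inner_single_left]; simp
  rw [e1, e2]
  simp only [Submodule.coe_orthogonalProjectionOnto_apply]
  rw [← Submodule.inner_starProjection_left_eq_right]
  exact inner_conj_symm _ _

lemma suppP_idem (Ψ : Matrix (Fin m) (Fin n) ℂ) : suppP Ψ * suppP Ψ = suppP Ψ := by
  apply ext_of_mulVec
  intro v
  rw [← Matrix.mulVec_mulVec]
  obtain ⟨w, hw⟩ := suppP_mulVec_mem Ψ v
  rw [← hw, suppP_mulVec_of_mem]

lemma suppP_mul_rho (Ψ : Matrix (Fin m) (Fin n) ℂ) : suppP Ψ * (Ψ * Ψᴴ) = Ψ * Ψᴴ := by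
  apply ext_of_mulVec
  intro v
  rw [← Matrix.mulVec_mulVec, ← Matrix.mulVec_mulVec]
  exact suppP_mulVec_of_mem Ψ

lemma suppP_kernel (Ψ : Matrix (Fin m) (Fin n) ℂ) (v : Fin m → ℂ)
    (h : (Ψ * Ψᴴ) *ᵥ v = 0) : suppP Ψ *ᵥ v = 0 := by
  have h1 : Ψᴴ *ᵥ v = 0 := conjT_mulVec_eq_zero h
  have h2 : ((WithLp.equiv 2 (Fin m → ℂ)).symm v : EuclideanSpace ℂ (Fin m)) ∈ (colSpace Ψ)ᗮ :=
    mem_orthogonal_colSpace_iff.mpr h1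
  have h3 := suppP_mulVec Ψ ((WithLp.equiv 2 (Fin m → ℂ)).symm v)
  have h4 : ((Submodule.orthogonalProjectionOnto (colSpace Ψ) ((WithLp.equiv 2 (Fin m → ℂ)).symm v)) : EuclideanSpace ℂ (Fin m)) = 0 := by
    rw [Submodule.orthogonalProjectionOnto_apply_of_mem_orthogonal h2]; rfl
  exact h3.trans (congrArg WithLp.ofLp h4)

lemma suppP_isSupport (Ψ : Matrix (Fin m) (Fin n) ℂ) :
    (suppP Ψ).IsHermitian ∧ suppP Ψ * suppP Ψ = suppP Ψ ∧
      suppP Ψ * (Ψ * Ψᴴ) = Ψ * Ψᴴ ∧ ∀ v, (Ψ * Ψᴴ) *ᵥ v = 0 → suppP Ψ *ᵥ v = 0 :=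
  ⟨suppP_hermitian Ψ, suppP_idem Ψ, suppP_mul_rho Ψ, suppP_kernel Ψ⟩

lemma rho_herm (Ψ : Matrix (Fin m) (Fin n) ℂ) : (Ψ * Ψᴴ)ᴴ = Ψ * Ψᴴ := by
  rw [Matrix.conjTranspose_mul, Matrix.conjTranspose_conjTranspose]

lemma suppEqOnPsi {Ψ : Matrix (Fin m) (Fin n) ℂ} {P : Matrix (Fin m) (Fin m) ℂ}
    (hH : Pᴴ = P) (hρ : P * (Ψ * Ψᴴ) = Ψ * Ψᴴ) : P * Ψ = Ψ := by
  have hρH := rho_herm Ψ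
  have h1 : (Ψ * Ψᴴ) * P = Ψ * Ψᴴ := by
    have h := congrArg Matrix.conjTranspose hρ
    rw [Matrix.conjTranspose_mul, hH, hρH] at h
    exact h
  have hA : (P * Ψ - Ψ) * (P * Ψ - Ψ)ᴴ = 0 := by
    rw [Matrix.conjTranspose_sub, Matrix.conjTranspose_mul, hH]
    rw [Matrix.sub_mul, Matrix.mul_sub, Matrix.mul_sub]
    have e1 : P * Ψ * (Ψᴴ * P) = Ψ * Ψᴴ := by
      rw [← Matrix.mul_assoc, Matrix.mul_assoc P Ψ Ψᴴ, hρ, h1]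
    have e2 : P * Ψ * Ψᴴ = Ψ * Ψᴴ := by rw [Matrix.mul_assoc, hρ]
    have e3 : Ψ * (Ψᴴ * P) = Ψ * Ψᴴ := by rw [← Matrix.mul_assoc, h1]
    rw [e1, e2, e3]
    simp
  have h0 := eq_zero_of_mul_conjTranspose_self hA
  exact sub_eq_zero.mp h0

lemma genericRange {Ψ : Matrix (Fin m) (Fin n) ℂ} {P : Matrix (Fin m) (Fin m) ℂ}
    (hH : Pᴴ = P) (hρ : P * (Ψ * Ψᴴ) = Ψ * Ψᴴ)
    (hker : ∀ v, (Ψ * Ψᴴ) *ᵥ v = 0 → P *ᵥ v = 0) (v : Fin m → ℂ) :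
    ∃ w, Ψ *ᵥ w = P *ᵥ v := by
  set vE : EuclideanSpace ℂ (Fin m) := (WithLp.equiv 2 (Fin m → ℂ)).symm v with hvE
  set p : EuclideanSpace ℂ (Fin m) := ↑(Submodule.orthogonalProjectionOnto (colSpace Ψ) vE) with hp
  obtain ⟨w, hw⟩ := mem_colSpace.mp (SetLike.coe_mem (Submodule.orthogonalProjectionOnto (colSpace Ψ) vE))
  have hq : vE - p ∈ (colSpace Ψ)ᗮ := Submodule.sub_starProjection_mem_orthogonal vE
  have hq0 : Ψᴴ *ᵥ ((vE - p : EuclideanSpace ℂ (Fin m)) : Fin m → ℂ) = 0 :=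
    mem_orthogonal_colSpace_iff.mp hq
  have hρq : (Ψ * Ψᴴ) *ᵥ ((vE - p : EuclideanSpace ℂ (Fin m)) : Fin m → ℂ) = 0 := by
    rw [← Matrix.mulVec_mulVec, hq0, Matrix.mulVec_zero]
  have hPq : P *ᵥ ((vE - p : EuclideanSpace ℂ (Fin m)) : Fin m → ℂ) = 0 := hker _ hρq
  have hPΨ : P * Ψ = Ψ := suppEqOnPsi hH hρ
  refine ⟨w, ?_⟩
  have hsplit : p + (vE - p) = vE := by rw [add_comm, sub_add_cancel]
  have h5 : P *ᵥ v = P *ᵥ ((p : Fin m → ℂ) + ((vE - p : EuclideanSpace ℂ (Fin m)) : Fin m → ℂ)) :=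
    congrArg (fun z : EuclideanSpace ℂ (Fin m) => P *ᵥ (z : Fin m → ℂ)) hsplit.symm
  rw [h5, Matrix.mulVec_add, hPq, add_zero]
  have h6 : P *ᵥ (p : Fin m → ℂ) = Ψ *ᵥ w := by
    rw [hp, ← hw, Matrix.mulVec_mulVec, hPΨ]
  rw [h6]

lemma exists_move {Ψ : Matrix (Fin m) (Fin n) ℂ} {P M : Matrix (Fin m) (Fin m) ℂ}
    (hH : Pᴴ = P) (hρ : P * (Ψ * Ψᴴ) = Ψ * Ψᴴ)
    (hker : ∀ v, (Ψ * Ψᴴ) *ᵥ v = 0 → P *ᵥ v = 0) (hc : P * M = M * P) :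
    ∃ W : Matrix (Fin n) (Fin n) ℂ, M * Ψ = Ψ * W := by
  have hPΨ : P * Ψ = Ψ := suppEqOnPsi hH hρ
  have hMP : M * Ψ = P * (M * Ψ) := by
    calc M * Ψ = M * (P * Ψ) := by rw [hPΨ]
      _ = (M * P) * Ψ := by rw [Matrix.mul_assoc]
      _ = (P * M) * Ψ := by rw [hc]
      _ = P * (M * Ψ) := by rw [Matrix.mul_assoc]
  choose w hw using fun j => genericRange hH hρ hker (fun i => (M * Ψ) i j)
  refine ⟨Matrix.of (fun k j => w j k), ?_⟩
  ext i j
  have h1 : (Ψ * Matrix.of (fun k j => w j k)) i j = (Ψ *ᵥ w j) i := by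
    rw [Matrix.mul_apply]; rfl
  rw [h1, hw j]
  have h2 : (P *ᵥ fun i => (M * Ψ) i j) i = (P * (M * Ψ)) i j := by
    rw [Matrix.mul_apply]; rfl
  rw [h2, ← hMP]

lemma suppP_comm {Ψ : Matrix (Fin m) (Fin n) ℂ} {M : Matrix (Fin m) (Fin m) ℂ} {W : Matrix (Fin n) (Fin n) ℂ}
    (hH : Mᴴ = M) (hMW : M * Ψ = Ψ * W) : suppP Ψ * M = M * suppP Ψ := by
  have hPH : (suppP Ψ)ᴴ = suppP Ψ := suppP_hermitian Ψ
  have h1 : suppP Ψ * M * suppP Ψ = M * suppP Ψ := by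
    apply ext_of_mulVec; intro v
    obtain ⟨w, hw⟩ := suppP_mulVec_mem Ψ v
    have lhs : (suppP Ψ * M * suppP Ψ) *ᵥ v = suppP Ψ *ᵥ (M *ᵥ (suppP Ψ *ᵥ v)) := by
      rw [Matrix.mulVec_mulVec, Matrix.mulVec_mulVec]
    have rhs : (M * suppP Ψ) *ᵥ v = M *ᵥ (suppP Ψ *ᵥ v) := by rw [Matrix.mulVec_mulVec]
    rw [lhs, rhs, ← hw]
    have hM : M *ᵥ (Ψ *ᵥ w) = Ψ *ᵥ (W *ᵥ w) := by
      rw [Matrix.mulVec_mulVec, hMW, ← Matrix.mulVec_mulVec]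
    rw [hM, suppP_mulVec_of_mem]
  have h2 : (suppP Ψ * M * suppP Ψ)ᴴ = suppP Ψ * M * suppP Ψ := by
    rw [Matrix.conjTranspose_mul, Matrix.conjTranspose_mul, hH, hPH, Matrix.mul_assoc]
  have h3 : (M * suppP Ψ)ᴴ = suppP Ψ * M := by
    rw [Matrix.conjTranspose_mul, hPH, hH]
  rw [← h3, ← h1, h2, h1]

end Aux

section AuxKron
variable {dA dB : ℕ}

lemma kronA (M : Matrix (Fin dA) (Fin dA) ℂ) (ψ : Fin dA × Fin dB → ℂ) (i : Fin dA) (j : Fin dB) :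
    ((M ⊗ₖ (1 : Matrix (Fin dB) (Fin dB) ℂ)) *ᵥ ψ) (i, j)
      = (M * Matrix.of fun i j => ψ (i, j)) i j := by
  rw [Matrix.mul_apply]
  show ∑ p : Fin dA × Fin dB, (M ⊗ₖ (1 : Matrix (Fin dB) (Fin dB) ℂ)) (i, j) p * ψ p = _
  rw [Fintype.sum_prod_type]
  simp [Matrix.kroneckerMap_apply, Matrix.one_apply, ite_mul, mul_ite]

lemma kronAh (Mh : Matrix (Fin dB) (Fin dB) ℂ) (ψ : Fin dA × Fin dB → ℂ) (i : Fin dA) (j : Fin dB) :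
    (((1 : Matrix (Fin dA) (Fin dA) ℂ) ⊗ₖ Mh) *ᵥ ψ) (i, j)
      = ((Matrix.of fun i j => ψ (i, j)) * Mhᵀ) i j := by
  rw [Matrix.mul_apply]
  show ∑ p : Fin dA × Fin dB, ((1 : Matrix (Fin dA) (Fin dA) ℂ) ⊗ₖ Mh) (i, j) p * ψ p = _
  rw [Fintype.sum_prod_type]
  simp [Matrix.kroneckerMap_apply, Matrix.one_apply, ite_mul, mul_ite, mul_comm]

lemma kronB (N : Matrix (Fin dB) (Fin dB) ℂ) (ψ : Fin dA × Fin dB → ℂ) (i : Fin dA) (j : Fin dB) :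
    (((1 : Matrix (Fin dA) (Fin dA) ℂ) ⊗ₖ N) *ᵥ ψ) (i, j)
      = (N * (Matrix.of fun i j => ψ (i, j))ᵀ) j i := by
  rw [Matrix.mul_apply]
  show ∑ p : Fin dA × Fin dB, ((1 : Matrix (Fin dA) (Fin dA) ℂ) ⊗ₖ N) (i, j) p * ψ p = _
  rw [Fintype.sum_prod_type]
  simp [Matrix.kroneckerMap_apply, Matrix.one_apply, ite_mul, mul_ite]

lemma kronBh (Nh : Matrix (Fin dA) (Fin dA) ℂ) (ψ : Fin dA × Fin dB → ℂ) (i : Fin dA) (j : Fin dB) :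
    ((Nh ⊗ₖ (1 : Matrix (Fin dB) (Fin dB) ℂ)) *ᵥ ψ) (i, j)
      = ((Matrix.of fun i j => ψ (i, j))ᵀ * Nhᵀ) j i := by
  rw [Matrix.mul_apply]
  show ∑ p : Fin dA × Fin dB, (Nh ⊗ₖ (1 : Matrix (Fin dB) (Fin dB) ℂ)) (i, j) p * ψ p = _
  rw [Fintype.sum_prod_type]
  simp [Matrix.kroneckerMap_apply, Matrix.one_apply, ite_mul, mul_ite, mul_comm]

end AuxKron

/-- A quantum model is centrally supported iff each Alice operator can be
moved to Bob's side on `ψ` and vice versa. -/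
theorem statement9 {X Y A B : Type} [Fintype A] [Fintype B]
    (S : QModel X Y A B) :
    CentrallySupported S ↔
      ((∀ (x : X) (a : A), ∃ Mh : Matrix (Fin S.dB) (Fin S.dB) ℂ,
          (S.M x a ⊗ₖ (1 : Matrix (Fin S.dB) (Fin S.dB) ℂ)).mulVec S.ψ
            = ((1 : Matrix (Fin S.dA) (Fin S.dA) ℂ) ⊗ₖ Mh).mulVec S.ψ)
        ∧ (∀ (y : Y) (b : B), ∃ Nh : Matrix (Fin S.dA) (Fin S.dA) ℂ,
          ((1 : Matrix (Fin S.dA) (Fin S.dA) ℂ) ⊗ₖ S.N y b).mulVec S.ψ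
            = (Nh ⊗ₖ (1 : Matrix (Fin S.dB) (Fin S.dB) ℂ)).mulVec S.ψ)) := by
  classical
  have hredA : redA S.ψ = (Matrix.of fun i j => S.ψ (i, j)) * (Matrix.of fun i j => S.ψ (i, j))ᴴ := by
    ext i i'
    simp [redA, Matrix.mul_apply, Matrix.conjTranspose_apply]
  have hredB : redB S.ψ = (Matrix.of fun i j => S.ψ (i, j))ᵀ * ((Matrix.of fun i j => S.ψ (i, j))ᵀ)ᴴ := by
    ext j j'
    simp [redB, Matrix.mul_apply, Matrix.conjTranspose_apply]
  constructor
  · rintro ⟨PA, PB, ⟨hA1, hA2, hA3, hA4⟩, ⟨hB1, hB2, hB3, hB4⟩, hcA, hcB⟩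
    rw [hredA] at hA3 hA4
    rw [hredB] at hB3 hB4
    constructor
    · intro x a
      obtain ⟨W, hW⟩ := exists_move hA1 hA3 hA4 (hcA x a)
      refine ⟨Wᵀ, ?_⟩
      funext p
      obtain ⟨i, j⟩ := p
      rw [kronA, kronAh, hW, Matrix.transpose_transpose]
    · intro y b
      obtain ⟨W, hW⟩ := exists_move hB1 hB3 hB4 (hcB y b)
      refine ⟨Wᵀ, ?_⟩
      funext p
      obtain ⟨i, j⟩ := p
      rw [kronB, kronBh, hW, Matrix.transpose_transpose]
  · rintro ⟨hA, hB⟩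
    refine ⟨suppP (Matrix.of fun i j => S.ψ (i, j)), suppP (Matrix.of fun i j => S.ψ (i, j))ᵀ,
      ?_, ?_, ?_, ?_⟩
    · rw [hredA]
      exact ⟨suppP_hermitian _, suppP_idem _, suppP_mul_rho _, suppP_kernel _⟩
    · rw [hredB]
      exact ⟨suppP_hermitian _, suppP_idem _, suppP_mul_rho _, suppP_kernel _⟩
    · intro x a
      obtain ⟨Mh, hMh⟩ := hA x a
      have hW : S.M x a * (Matrix.of fun i j => S.ψ (i, j))
          = (Matrix.of fun i j => S.ψ (i, j)) * Mhᵀ := by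
        ext i j
        have h := congrFun hMh (i, j)
        rw [kronA, kronAh] at h
        exact h
      exact suppP_comm (S.M_pos x a).1 hW
    · intro y b
      obtain ⟨Nh, hNh⟩ := hB y b
      have hW : S.N y b * (Matrix.of fun i j => S.ψ (i, j))ᵀ
          = (Matrix.of fun i j => S.ψ (i, j))ᵀ * Nhᵀ := by
        ext j i
        have h := congrFun hNh (i, j)
        rw [kronB, kronBh] at h
        exact h
      exact suppP_comm (S.N_pos y b).1 hW


end SelfTestPaper
end
end

section
/- Let p ∈ C_q(X,X,A,A) be a synchronous quantum correlation. Then for every quantum model S for p there exists a projective quantum model S' for p with f_S = f_{S'} (the abstract state defined by any model for p is projective). Consequently, any two quantum models for p define the same abstract state if and only if any two projective quantum models for p define the same abstract state. -/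
open scoped Matrix Kronecker ComplexOrder

noncomputable section

namespace SelfTestPaper

variable {X Y A B : Type} [Fintype A] [Fintype B]

section Helpers

open Matrix

/-! ### Basic facts about `qInner` -/

open scoped MatrixOrder in
lemma psd_exists_sqrt {n : Type} [Fintype n] [DecidableEq n] {T : Matrix n n ℂ}
    (hT : T.PosSemidef) : ∃ R : Matrix n n ℂ, R.PosSemidef ∧ R * R = T :=
  ⟨CFC.sqrt T, (CFC.sqrt_nonneg T).posSemidef, CFC.sqrt_mul_sqrt_self T hT.nonneg⟩

lemma qInner_self_zero {n : Type} [Fintype n] {v : n → ℂ} (h : qInner v v = 0) : v = 0 := by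
  have h2 : ∑ i, (Complex.normSq (v i) : ℝ) = 0 := by
    have he : qInner v v = ((∑ i, Complex.normSq (v i) : ℝ) : ℂ) := by
      simp [qInner, Complex.star_def, Complex.normSq_eq_conj_mul_self]
    exact_mod_cast he ▸ h
  funext i
  have := (Finset.sum_eq_zero_iff_of_nonneg
    (fun i _ => Complex.normSq_nonneg (v i))).mp h2 i (Finset.mem_univ i)
  exact Complex.normSq_eq_zero.mp this

lemma qInner_mulVec_adj {n : Type} [Fintype n] (A : Matrix n n ℂ) (v w : n → ℂ) :
    qInner v (A *ᵥ w) = qInner (Aᴴ *ᵥ v) w := by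
  simp only [qInner, mulVec, dotProduct, conjTranspose_apply, Finset.mul_sum, Finset.sum_mul,
    star_sum, star_mul', star_star]
  rw [Finset.sum_comm]
  congr 1; ext i; congr 1; ext j; ring

lemma qInner_mulVec_adj' {n : Type} [Fintype n] (A : Matrix n n ℂ) (v w : n → ℂ) :
    qInner (A *ᵥ v) w = qInner v (Aᴴ *ᵥ w) := by
  rw [qInner_mulVec_adj, Matrix.conjTranspose_conjTranspose]

lemma qInner_sub_right {n : Type} [Fintype n] (v w w' : n → ℂ) :
    qInner v (w - w') = qInner v w - qInner v w' := by
  simp [qInner, mul_sub, Finset.sum_sub_distrib]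

lemma psd_mulVec_eq_zero {n : Type} [Fintype n] [DecidableEq n] {T : Matrix n n ℂ}
    (hT : T.PosSemidef) {v : n → ℂ} (h : qInner v (T *ᵥ v) = 0) : T *ᵥ v = 0 := by
  obtain ⟨R, hRpos, hRR⟩ := psd_exists_sqrt hT
  have hs : R *ᵥ v = 0 := by
    apply qInner_self_zero
    have h1 : T *ᵥ v = R *ᵥ (R *ᵥ v) := by
      rw [mulVec_mulVec, hRR]
    rw [h1, qInner_mulVec_adj, hRpos.isHermitian.eq] at h
    exact h
  rw [← hRR, ← mulVec_mulVec, hs, mulVec_zero]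

/-! ### Kronecker product helpers -/

lemma kron_conjT {m n : Type} [Fintype m] [Fintype n] (A : Matrix m m ℂ) (B : Matrix n n ℂ) :
    (A ⊗ₖ B)ᴴ = Aᴴ ⊗ₖ Bᴴ := by
  ext ⟨i, j⟩ ⟨k, l⟩
  simp [conjTranspose_apply, kroneckerMap_apply, mul_comm]

lemma kron_posSemidef {m n : Type} [Fintype m] [Fintype n] [DecidableEq m] [DecidableEq n]
    {A : Matrix m m ℂ} {B : Matrix n n ℂ} (hA : A.PosSemidef) (hB : B.PosSemidef) :
    (A ⊗ₖ B).PosSemidef := by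
  obtain ⟨RA, hRA, hRRA⟩ := psd_exists_sqrt hA
  obtain ⟨RB, hRB, hRRB⟩ := psd_exists_sqrt hB
  have h : A ⊗ₖ B = (RA ⊗ₖ RB)ᴴ * (RA ⊗ₖ RB) := by
    rw [kron_conjT, hRA.isHermitian.eq, hRB.isHermitian.eq,
      ← mul_kronecker_mul, hRRA, hRRB]
  rw [h]
  exact posSemidef_conjTranspose_mul_self _

lemma kron_mulVec_left {dA dB : ℕ} (A : Matrix (Fin dA) (Fin dA) ℂ) (v : Fin dA × Fin dB → ℂ)
    (i : Fin dA) (j : Fin dB) :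
    ((A ⊗ₖ (1 : Matrix (Fin dB) (Fin dB) ℂ)) *ᵥ v) (i, j) = (A *ᵥ fun i' => v (i', j)) i := by
  simp only [mulVec, dotProduct, Fintype.sum_prod_type, kroneckerMap_apply, one_apply]
  rw [Finset.sum_comm]
  simp [Finset.sum_ite_eq', mul_ite, Finset.mul_sum]

lemma kron_mulVec_right {dA dB : ℕ} (B : Matrix (Fin dB) (Fin dB) ℂ) (v : Fin dA × Fin dB → ℂ)
    (i : Fin dA) (j : Fin dB) :
    (((1 : Matrix (Fin dA) (Fin dA) ℂ) ⊗ₖ B) *ᵥ v) (i, j) = (B *ᵥ fun j' => v (i, j')) j := by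
  simp only [mulVec, dotProduct, Fintype.sum_prod_type, kroneckerMap_apply, one_apply]
  simp [Finset.sum_ite_eq', mul_ite, Finset.mul_sum]

lemma kron_sum_right {m n : Type} {ι : Type} [Fintype m] [Fintype n] (s : Finset ι)
    (A : Matrix m m ℂ) (N : ι → Matrix n n ℂ) :
    A ⊗ₖ (∑ b ∈ s, N b) = ∑ b ∈ s, A ⊗ₖ N b := by
  ext ⟨i, j⟩ ⟨k, l⟩
  simp [kroneckerMap_apply, Finset.mul_sum, Matrix.sum_apply]

lemma kron_sum_left {m n : Type} {ι : Type} [Fintype m] [Fintype n] (s : Finset ι)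
    (M : ι → Matrix m m ℂ) (B : Matrix n n ℂ) :
    (∑ a ∈ s, M a) ⊗ₖ B = ∑ a ∈ s, M a ⊗ₖ B := by
  ext ⟨i, j⟩ ⟨k, l⟩
  simp [kroneckerMap_apply, Finset.sum_mul, Matrix.sum_apply]

lemma sub_kron {m n : Type} [Fintype m] [Fintype n] (A A' : Matrix m m ℂ) (B : Matrix n n ℂ) :
    (A - A') ⊗ₖ B = A ⊗ₖ B - A' ⊗ₖ B := by
  ext ⟨i, j⟩ ⟨k, l⟩
  simp [kroneckerMap_apply, sub_mul]

lemma kron_sub {m n : Type} [Fintype m] [Fintype n] (A : Matrix m m ℂ) (B B' : Matrix n n ℂ) :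
    A ⊗ₖ (B - B') = A ⊗ₖ B - A ⊗ₖ B' := by
  ext ⟨i, j⟩ ⟨k, l⟩
  simp [kroneckerMap_apply, mul_sub]

lemma matSum_mulVec {ι m n : Type} [Fintype n] (s : Finset ι) (T : ι → Matrix m n ℂ)
    (v : n → ℂ) : (∑ i ∈ s, T i) *ᵥ v = ∑ i ∈ s, T i *ᵥ v := by
  funext j
  simp only [mulVec, dotProduct, Matrix.sum_apply, Finset.sum_apply, Finset.sum_mul]
  exact Finset.sum_comm

lemma posSemidef_sum {ι n : Type} [Fintype n] (s : Finset ι) (f : ι → Matrix n n ℂ)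
    (h : ∀ i ∈ s, (f i).PosSemidef) : (∑ i ∈ s, f i).PosSemidef := by
  classical
  induction s using Finset.cons_induction with
  | empty => simp only [Finset.sum_empty]; exact Matrix.PosSemidef.zero
  | cons a s ha ih =>
    rw [Finset.sum_cons]
    exact (h a (Finset.mem_cons_self a s)).add (ih fun i hi => h i (Finset.mem_cons_of_mem hi))

lemma psd_of_proj {n : Type} [Fintype n] [DecidableEq n] {P : Matrix n n ℂ}
    (hH : Pᴴ = P) (hPP : P * P = P) : P.PosSemidef := by
  have : P = Pᴴ * P := by rw [hH, hPP]
  rw [this]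
  exact posSemidef_conjTranspose_mul_self _

/-! ### Support projections -/

lemma exists_support_proj {d : ℕ} (U : Submodule ℂ (Fin d → ℂ)) :
    ∃ P : Matrix (Fin d) (Fin d) ℂ, Pᴴ = P ∧ P * P = P ∧
      (∀ u : Fin d → ℂ, u ∈ U → P *ᵥ u = u) ∧ (∀ v : Fin d → ℂ, (P *ᵥ v) ∈ U) := by
  classical
  set U' : Submodule ℂ (EuclideanSpace ℂ (Fin d)) :=
    U.comap (WithLp.linearEquiv 2 ℂ (Fin d → ℂ)).toLinearMap with hU'
  set b := stdOrthonormalBasis ℂ U' with hb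
  set nU := Module.finrank ℂ U'
  set V : Matrix (Fin d) (Fin nU) ℂ := Matrix.of fun i k => (b k : EuclideanSpace ℂ (Fin d)) i
    with hV
  have hVc : ∀ c : Fin nU → ℂ, V *ᵥ c = ((∑ k, c k • b k : U') : EuclideanSpace ℂ (Fin d)) := by
    intro c
    funext i
    have h1 : ((∑ k, c k • b k : U') : EuclideanSpace ℂ (Fin d)) i
        = ∑ k, c k * (b k : EuclideanSpace ℂ (Fin d)) i := by
      rw [AddSubmonoidClass.coe_finset_sum, WithLp.ofLp_sum]
      exact Finset.sum_apply i _ _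
    rw [h1]
    simp only [mulVec, dotProduct, hV, Matrix.of_apply]
    exact Finset.sum_congr rfl fun x _ => mul_comm _ _
  have hVtV : ∀ (u : Fin d → ℂ) (k),
      (Vᴴ *ᵥ u) k = inner ℂ (b k : EuclideanSpace ℂ (Fin d)) (WithLp.toLp 2 u) := by
    intro u k
    simp [mulVec, dotProduct, conjTranspose_apply, hV, PiLp.inner_apply, RCLike.inner_apply,
      Complex.star_def, mul_comm]
  refine ⟨V * Vᴴ, ?_, ?_, ?_, ?_⟩
  · simp [conjTranspose_mul]
  · have hVV : Vᴴ * V = 1 := by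
      ext k l
      have horth := b.orthonormal
      rw [orthonormal_iff_ite] at horth
      have h2 := horth k l
      rw [Submodule.coe_inner] at h2
      simp only [mul_apply, conjTranspose_apply, hV, Matrix.of_apply, one_apply]
      rw [← h2, PiLp.inner_apply]
      simp [RCLike.inner_apply, Complex.star_def, mul_comm]
    rw [Matrix.mul_assoc V Vᴴ (V * Vᴴ), ← Matrix.mul_assoc Vᴴ V Vᴴ, hVV, Matrix.one_mul]
  · intro u hu
    rw [← mulVec_mulVec, hVc]
    have hu' : WithLp.toLp 2 u ∈ U' := hu
    have hrepr : ∀ k, (Vᴴ *ᵥ u) k = b.repr ⟨WithLp.toLp 2 u, hu'⟩ k := by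
      intro k; rw [hVtV, b.repr_apply_apply]; rfl
    have h2 : (∑ k, (Vᴴ *ᵥ u) k • b k : U') = ⟨WithLp.toLp 2 u, hu'⟩ := by
      have h3 : (∑ k, (Vᴴ *ᵥ u) k • b k : U') = ∑ k, b.repr ⟨WithLp.toLp 2 u, hu'⟩ k • b k :=
        Finset.sum_congr rfl fun k _ => by rw [hrepr k]
      rw [h3, b.sum_repr ⟨WithLp.toLp 2 u, hu'⟩]
    rw [h2]
  · intro v
    rw [← mulVec_mulVec, hVc]
    exact (∑ k, (Vᴴ *ᵥ v) k • b k : U').2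

lemma fix_mul_of_cols {d e : ℕ} {U : Submodule ℂ (Fin d → ℂ)}
    {P : Matrix (Fin d) (Fin d) ℂ} (hfix : ∀ u : Fin d → ℂ, u ∈ U → P *ᵥ u = u)
    {W : Matrix (Fin d) (Fin e) ℂ} (hW : ∀ j, (fun k => W k j) ∈ U) : P * W = W := by
  ext i j
  exact congrFun (hfix _ (hW j)) i

end Helpers

section Main

open Matrix

set_option maxHeartbeats 4000000 in
/-- Core construction: every model of a synchronous quantum correlation has a projective
companion defining the same abstract state. -/
theorem exists_projective_model {X A : Type} [Fintype A]
    (p : A → A → X → X → ℝ)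
    (hsync : ∀ (x : X) (a b : A), a ≠ b → p a b x x = 0)
    (S : QModel X X A A) (hre : Realizes S p) :
    ∃ S' : QModel X X A A, Projective S' ∧ Realizes S' p ∧ SameState S S' := by
  classical
  by_cases hX : Nonempty X
  swap
  · exact ⟨S, ⟨fun x a => (hX ⟨x⟩).elim, fun y b => (hX ⟨y⟩).elim⟩, hre,
      fun wA wB => rfl⟩
  obtain ⟨x₀⟩ := hX
  -- A is nonempty
  have hA : Nonempty A := by
    by_contra hA
    have hAe : IsEmpty A := not_nonempty_iff.mp hA
    have h10 := S.M_sum x₀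
    rw [Finset.univ_eq_empty, Finset.sum_empty] at h10
    haveI : IsEmpty (Fin S.dA) := by
      by_contra h
      have hne : Nonempty (Fin S.dA) := not_isEmpty_iff.mp h
      obtain ⟨i⟩ := hne
      have := congrFun (congrFun h10 i) i
      simp [Matrix.one_apply] at this
    have hu := S.ψ_unit
    rw [Finset.univ_eq_empty, Finset.sum_empty] at hu
    exact zero_ne_one hu
  obtain ⟨a₀⟩ := hA
  -- Step 1: cross terms vanish
  have hzero : ∀ (x : X) (a b : A), a ≠ b → (S.M x a ⊗ₖ S.N x b) *ᵥ S.ψ = 0 := by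
    intro x a b hab
    apply psd_mulVec_eq_zero (kron_posSemidef (S.M_pos x a) (S.N_pos x b))
    rw [hre a b x x, hsync x a b hab]
    norm_num
  -- Step 2: (M ⊗ 1)ψ = (M ⊗ N)ψ = (1 ⊗ N)ψ
  have hsumM : ∀ (x : X) (a : A),
      (S.M x a ⊗ₖ (1 : Matrix (Fin S.dB) (Fin S.dB) ℂ)) *ᵥ S.ψ
        = (S.M x a ⊗ₖ S.N x a) *ᵥ S.ψ := by
    intro x a
    have h1 : S.M x a ⊗ₖ (1 : Matrix (Fin S.dB) (Fin S.dB) ℂ)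
        = ∑ b, S.M x a ⊗ₖ S.N x b := by
      rw [← kron_sum_right, S.N_sum x]
    rw [h1, matSum_mulVec]
    rw [Finset.sum_eq_single a (fun b _ hb => hzero x a b (Ne.symm hb)) (by simp)]
  have hsumN : ∀ (x : X) (a : A),
      ((1 : Matrix (Fin S.dA) (Fin S.dA) ℂ) ⊗ₖ S.N x a) *ᵥ S.ψ
        = (S.M x a ⊗ₖ S.N x a) *ᵥ S.ψ := by
    intro x a
    have h1 : (1 : Matrix (Fin S.dA) (Fin S.dA) ℂ) ⊗ₖ S.N x a
        = ∑ b, S.M x b ⊗ₖ S.N x a := by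
      rw [← kron_sum_left, S.M_sum x]
    rw [h1, matSum_mulVec]
    rw [Finset.sum_eq_single a (fun b _ hb => hzero x b a hb) (by simp)]
  have h14 : ∀ (x : X) (a : A),
      (S.M x a ⊗ₖ (1 : Matrix (Fin S.dB) (Fin S.dB) ℂ)) *ᵥ S.ψ
        = ((1 : Matrix (Fin S.dA) (Fin S.dA) ℂ) ⊗ₖ S.N x a) *ᵥ S.ψ := by
    intro x a; rw [hsumM, hsumN]
  -- Step 3: M - M² is PSD
  have hM1 : ∀ (x : X) (a : A), ((1 : Matrix (Fin S.dA) (Fin S.dA) ℂ) - S.M x a).PosSemidef := by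
    intro x a
    have h1 : (1 : Matrix (Fin S.dA) (Fin S.dA) ℂ) - S.M x a
        = ∑ b ∈ Finset.univ.erase a, S.M x b := by
      have := Finset.add_sum_erase Finset.univ (S.M x) (Finset.mem_univ a)
      rw [S.M_sum x] at this
      rw [← this]; abel
    rw [h1]
    exact posSemidef_sum _ _ fun b _ => S.M_pos x b
  have hN1 : ∀ (x : X) (a : A), ((1 : Matrix (Fin S.dB) (Fin S.dB) ℂ) - S.N x a).PosSemidef := by
    intro x a
    have h1 : (1 : Matrix (Fin S.dB) (Fin S.dB) ℂ) - S.N x a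
        = ∑ b ∈ Finset.univ.erase a, S.N x b := by
      have := Finset.add_sum_erase Finset.univ (S.N x) (Finset.mem_univ a)
      rw [S.N_sum x] at this
      rw [← this]; abel
    rw [h1]
    exact posSemidef_sum _ _ fun b _ => S.N_pos x b
  have hKA : ∀ (x : X) (a : A), (S.M x a - S.M x a * S.M x a).PosSemidef := by
    intro x a
    obtain ⟨R, hRpos, hRR⟩ := psd_exists_sqrt (S.M_pos x a)
    have h1 : R * ((1 : Matrix (Fin S.dA) (Fin S.dA) ℂ) - S.M x a) * R
        = S.M x a - S.M x a * S.M x a := by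
      rw [Matrix.mul_sub, Matrix.mul_one, Matrix.sub_mul, hRR]
      congr 1
      rw [← hRR]
      simp only [Matrix.mul_assoc]
    rw [← h1]
    have := (hM1 x a).conjTranspose_mul_mul_same R
    rwa [hRpos.isHermitian.eq] at this
  have hKB : ∀ (x : X) (a : A), (S.N x a - S.N x a * S.N x a).PosSemidef := by
    intro x a
    obtain ⟨R, hRpos, hRR⟩ := psd_exists_sqrt (S.N_pos x a)
    have h1 : R * ((1 : Matrix (Fin S.dB) (Fin S.dB) ℂ) - S.N x a) * R
        = S.N x a - S.N x a * S.N x a := by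
      rw [Matrix.mul_sub, Matrix.mul_one, Matrix.sub_mul, hRR]
      congr 1
      rw [← hRR]
      simp only [Matrix.mul_assoc]
    rw [← h1]
    have := (hN1 x a).conjTranspose_mul_mul_same R
    rwa [hRpos.isHermitian.eq] at this
  -- Step 4: ((M - M²) ⊗ 1)ψ = 0 and (1 ⊗ (N - N²))ψ = 0
  have hKAψ : ∀ (x : X) (a : A),
      ((S.M x a - S.M x a * S.M x a) ⊗ₖ (1 : Matrix (Fin S.dB) (Fin S.dB) ℂ)) *ᵥ S.ψ = 0 := by
    intro x a
    apply psd_mulVec_eq_zero (kron_posSemidef (hKA x a) Matrix.PosSemidef.one)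
    have hM1' : (S.M x a ⊗ₖ (1 : Matrix (Fin S.dB) (Fin S.dB) ℂ))ᴴ
        = S.M x a ⊗ₖ (1 : Matrix (Fin S.dB) (Fin S.dB) ℂ) := by
      rw [kron_conjT, (S.M_pos x a).isHermitian.eq, Matrix.conjTranspose_one]
    have hsq : qInner S.ψ (((S.M x a * S.M x a) ⊗ₖ (1 : Matrix (Fin S.dB) (Fin S.dB) ℂ)) *ᵥ S.ψ)
        = qInner S.ψ ((S.M x a ⊗ₖ (1 : Matrix (Fin S.dB) (Fin S.dB) ℂ)) *ᵥ S.ψ) := by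
      have e1 : (S.M x a * S.M x a) ⊗ₖ (1 : Matrix (Fin S.dB) (Fin S.dB) ℂ)
          = (S.M x a ⊗ₖ (1 : Matrix (Fin S.dB) (Fin S.dB) ℂ))
            * (S.M x a ⊗ₖ (1 : Matrix (Fin S.dB) (Fin S.dB) ℂ)) := by
        rw [← mul_kronecker_mul, Matrix.mul_one]
      have hN1' : (((1 : Matrix (Fin S.dA) (Fin S.dA) ℂ)) ⊗ₖ S.N x a)ᴴ
          = (1 : Matrix (Fin S.dA) (Fin S.dA) ℂ) ⊗ₖ S.N x a := by
        rw [kron_conjT, (S.N_pos x a).isHermitian.eq, Matrix.conjTranspose_one]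
      calc qInner S.ψ (((S.M x a * S.M x a) ⊗ₖ (1 : Matrix (Fin S.dB) (Fin S.dB) ℂ)) *ᵥ S.ψ)
          = qInner ((S.M x a ⊗ₖ (1 : Matrix (Fin S.dB) (Fin S.dB) ℂ)) *ᵥ S.ψ)
              ((S.M x a ⊗ₖ (1 : Matrix (Fin S.dB) (Fin S.dB) ℂ)) *ᵥ S.ψ) := by
            rw [e1, ← mulVec_mulVec, qInner_mulVec_adj, hM1']
        _ = qInner (((1 : Matrix (Fin S.dA) (Fin S.dA) ℂ) ⊗ₖ S.N x a) *ᵥ S.ψ)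
              ((S.M x a ⊗ₖ (1 : Matrix (Fin S.dB) (Fin S.dB) ℂ)) *ᵥ S.ψ) := by
            rw [h14 x a]
        _ = qInner S.ψ ((S.M x a ⊗ₖ S.N x a) *ᵥ S.ψ) := by
            rw [qInner_mulVec_adj', hN1', mulVec_mulVec, ← mul_kronecker_mul, Matrix.one_mul,
              Matrix.mul_one]
        _ = qInner S.ψ ((S.M x a ⊗ₖ (1 : Matrix (Fin S.dB) (Fin S.dB) ℂ)) *ᵥ S.ψ) := by
            rw [hsumM x a]
    rw [sub_kron, Matrix.sub_mulVec, qInner_sub_right, hsq, sub_self]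
  have hKBψ : ∀ (x : X) (a : A),
      ((1 : Matrix (Fin S.dA) (Fin S.dA) ℂ) ⊗ₖ (S.N x a - S.N x a * S.N x a)) *ᵥ S.ψ = 0 := by
    intro x a
    apply psd_mulVec_eq_zero (kron_posSemidef Matrix.PosSemidef.one (hKB x a))
    have hN1' : (((1 : Matrix (Fin S.dA) (Fin S.dA) ℂ)) ⊗ₖ S.N x a)ᴴ
        = (1 : Matrix (Fin S.dA) (Fin S.dA) ℂ) ⊗ₖ S.N x a := by
      rw [kron_conjT, (S.N_pos x a).isHermitian.eq, Matrix.conjTranspose_one]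
    have hsq : qInner S.ψ (((1 : Matrix (Fin S.dA) (Fin S.dA) ℂ) ⊗ₖ (S.N x a * S.N x a)) *ᵥ S.ψ)
        = qInner S.ψ (((1 : Matrix (Fin S.dA) (Fin S.dA) ℂ) ⊗ₖ S.N x a) *ᵥ S.ψ) := by
      have e1 : (1 : Matrix (Fin S.dA) (Fin S.dA) ℂ) ⊗ₖ (S.N x a * S.N x a)
          = ((1 : Matrix (Fin S.dA) (Fin S.dA) ℂ) ⊗ₖ S.N x a)
            * ((1 : Matrix (Fin S.dA) (Fin S.dA) ℂ) ⊗ₖ S.N x a) := by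
        rw [← mul_kronecker_mul, Matrix.mul_one]
      have hM1' : (S.M x a ⊗ₖ (1 : Matrix (Fin S.dB) (Fin S.dB) ℂ))ᴴ
          = S.M x a ⊗ₖ (1 : Matrix (Fin S.dB) (Fin S.dB) ℂ) := by
        rw [kron_conjT, (S.M_pos x a).isHermitian.eq, Matrix.conjTranspose_one]
      calc qInner S.ψ (((1 : Matrix (Fin S.dA) (Fin S.dA) ℂ) ⊗ₖ (S.N x a * S.N x a)) *ᵥ S.ψ)
          = qInner (((1 : Matrix (Fin S.dA) (Fin S.dA) ℂ) ⊗ₖ S.N x a) *ᵥ S.ψ)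
              (((1 : Matrix (Fin S.dA) (Fin S.dA) ℂ) ⊗ₖ S.N x a) *ᵥ S.ψ) := by
            rw [e1, ← mulVec_mulVec, qInner_mulVec_adj, hN1']
        _ = qInner ((S.M x a ⊗ₖ (1 : Matrix (Fin S.dB) (Fin S.dB) ℂ)) *ᵥ S.ψ)
              (((1 : Matrix (Fin S.dA) (Fin S.dA) ℂ) ⊗ₖ S.N x a) *ᵥ S.ψ) := by
            rw [h14 x a]
        _ = qInner S.ψ ((S.M x a ⊗ₖ S.N x a) *ᵥ S.ψ) := by
            rw [qInner_mulVec_adj', hM1', mulVec_mulVec, ← mul_kronecker_mul, Matrix.one_mul,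
              Matrix.mul_one]
        _ = qInner S.ψ (((1 : Matrix (Fin S.dA) (Fin S.dA) ℂ) ⊗ₖ S.N x a) *ᵥ S.ψ) := by
            rw [hsumN x a]
    rw [kron_sub, Matrix.sub_mulVec, qInner_sub_right, hsq, sub_self]
  -- Step 5: support subspaces
  set UA : Submodule ℂ (Fin S.dA → ℂ) :=
    Submodule.span ℂ (Set.range fun j : Fin S.dB => (fun i => S.ψ (i, j) : Fin S.dA → ℂ))
    with hUA
  set UB : Submodule ℂ (Fin S.dB → ℂ) :=
    Submodule.span ℂ (Set.range fun i : Fin S.dA => (fun j => S.ψ (i, j) : Fin S.dB → ℂ))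
    with hUB
  have hcolA : ∀ j : Fin S.dB, (fun i => S.ψ (i, j)) ∈ UA :=
    fun j => Submodule.subset_span ⟨j, rfl⟩
  have hcolB : ∀ i : Fin S.dA, (fun j => S.ψ (i, j)) ∈ UB :=
    fun i => Submodule.subset_span ⟨i, rfl⟩
  obtain ⟨PA, hPAh, hPAP, hPAfix, hPAran⟩ := exists_support_proj UA
  obtain ⟨PB, hPBh, hPBP, hPBfix, hPBran⟩ := exists_support_proj UB
  -- M preserves UA, N preserves UB
  have hMU : ∀ (x : X) (a : A) (u : Fin S.dA → ℂ), u ∈ UA → (S.M x a *ᵥ u) ∈ UA := by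
    intro x a u hu
    induction hu using Submodule.span_induction with
    | mem u hu =>
      obtain ⟨j, rfl⟩ := hu
      have h1 : S.M x a *ᵥ (fun i => S.ψ (i, j))
          = fun i => ∑ j', S.N x a j j' * S.ψ (i, j') := by
        funext i
        rw [← kron_mulVec_left (S.M x a) S.ψ i j, h14 x a,
          kron_mulVec_right (S.N x a) S.ψ i j]
        rfl
      rw [h1]
      have h2 : (fun i => ∑ j', S.N x a j j' * S.ψ (i, j'))
          = ∑ j', S.N x a j j' • (fun i => S.ψ (i, j') : Fin S.dA → ℂ) := by
        funext i
        simp [Finset.sum_apply]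
      rw [h2]
      exact Submodule.sum_mem _ fun j' _ => Submodule.smul_mem _ _ (hcolA j')
    | zero => rw [mulVec_zero]; exact Submodule.zero_mem _
    | add u v hu hv ihu ihv => rw [mulVec_add]; exact Submodule.add_mem _ ihu ihv
    | smul c u hu ihu => rw [mulVec_smul]; exact Submodule.smul_mem _ _ ihu
  have hNU : ∀ (x : X) (a : A) (u : Fin S.dB → ℂ), u ∈ UB → (S.N x a *ᵥ u) ∈ UB := by
    intro x a u hu
    induction hu using Submodule.span_induction with
    | mem u hu =>
      obtain ⟨i, rfl⟩ := hu
      have h1 : S.N x a *ᵥ (fun j => S.ψ (i, j))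
          = fun j => ∑ i', S.M x a i i' * S.ψ (i', j) := by
        funext j
        rw [← kron_mulVec_right (S.N x a) S.ψ i j, ← h14 x a,
          kron_mulVec_left (S.M x a) S.ψ i j]
        rfl
      rw [h1]
      have h2 : (fun j => ∑ i', S.M x a i i' * S.ψ (i', j))
          = ∑ i', S.M x a i i' • (fun j => S.ψ (i', j) : Fin S.dB → ℂ) := by
        funext j
        simp [Finset.sum_apply]
      rw [h2]
      exact Submodule.sum_mem _ fun i' _ => Submodule.smul_mem _ _ (hcolB i')
    | zero => rw [mulVec_zero]; exact Submodule.zero_mem _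
    | add u v hu hv ihu ihv => rw [mulVec_add]; exact Submodule.add_mem _ ihu ihv
    | smul c u hu ihu => rw [mulVec_smul]; exact Submodule.smul_mem _ _ ihu
  -- M² - M kills UA, N² - N kills UB
  have hMkill : ∀ (x : X) (a : A) (u : Fin S.dA → ℂ), u ∈ UA →
      (S.M x a - S.M x a * S.M x a) *ᵥ u = 0 := by
    intro x a u hu
    induction hu using Submodule.span_induction with
    | mem u hu =>
      obtain ⟨j, rfl⟩ := hu
      funext i
      have := congrFun (hKAψ x a) (i, j)
      rw [kron_mulVec_left] at this
      exact this
    | zero => rw [mulVec_zero]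
    | add u v hu hv ihu ihv => rw [mulVec_add, ihu, ihv, add_zero]
    | smul c u hu ihu => rw [mulVec_smul, ihu, smul_zero]
  have hNkill : ∀ (x : X) (a : A) (u : Fin S.dB → ℂ), u ∈ UB →
      (S.N x a - S.N x a * S.N x a) *ᵥ u = 0 := by
    intro x a u hu
    induction hu using Submodule.span_induction with
    | mem u hu =>
      obtain ⟨i, rfl⟩ := hu
      funext j
      have := congrFun (hKBψ x a) (i, j)
      rw [kron_mulVec_right] at this
      exact this
    | zero => rw [mulVec_zero]
    | add u v hu hv ihu ihv => rw [mulVec_add, ihu, ihv, add_zero]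
    | smul c u hu ihu => rw [mulVec_smul, ihu, smul_zero]
  -- columns of PA lie in UA
  have hPAcol : ∀ j, (fun k => PA k j) ∈ UA := by
    intro j
    have h1 : (fun k => PA k j) = PA *ᵥ Pi.single j 1 := by
      funext k
      rw [mulVec_single]
      simp
    rw [h1]
    exact hPAran _
  have hPBcol : ∀ j, (fun k => PB k j) ∈ UB := by
    intro j
    have h1 : (fun k => PB k j) = PB *ᵥ Pi.single j 1 := by
      funext k
      rw [mulVec_single]
      simp
    rw [h1]
    exact hPBran _
  -- M² P = M P
  have hMP : ∀ (x : X) (a : A), (S.M x a - S.M x a * S.M x a) * PA = 0 := by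
    intro x a
    ext i j
    exact congrFun (hMkill x a _ (hPAcol j)) i
  have hNP : ∀ (x : X) (a : A), (S.N x a - S.N x a * S.N x a) * PB = 0 := by
    intro x a
    ext i j
    exact congrFun (hNkill x a _ (hPBcol j)) i
  -- commutation PA M = M PA
  have hcommA : ∀ (x : X) (a : A), PA * S.M x a = S.M x a * PA := by
    intro x a
    have hcols : ∀ j, (fun k => (S.M x a * PA) k j) ∈ UA := by
      intro j
      have h1 : (fun k => (S.M x a * PA) k j) = S.M x a *ᵥ (fun k => PA k j) := rfl
      rw [h1]
      exact hMU x a _ (hPAcol j)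
    have h1 : PA * (S.M x a * PA) = S.M x a * PA := fix_mul_of_cols hPAfix hcols
    have h2 := congrArg Matrix.conjTranspose h1
    simp only [Matrix.conjTranspose_mul, hPAh, (S.M_pos x a).isHermitian.eq] at h2
    rw [← Matrix.mul_assoc] at h1
    rw [← h2, h1]
  have hcommB : ∀ (x : X) (a : A), PB * S.N x a = S.N x a * PB := by
    intro x a
    have hcols : ∀ j, (fun k => (S.N x a * PB) k j) ∈ UB := by
      intro j
      have h1 : (fun k => (S.N x a * PB) k j) = S.N x a *ᵥ (fun k => PB k j) := rfl
      rw [h1]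
      exact hNU x a _ (hPBcol j)
    have h1 : PB * (S.N x a * PB) = S.N x a * PB := fix_mul_of_cols hPBfix hcols
    have h2 := congrArg Matrix.conjTranspose h1
    simp only [Matrix.conjTranspose_mul, hPBh, (S.N_pos x a).isHermitian.eq] at h2
    rw [← Matrix.mul_assoc] at h1
    rw [← h2, h1]
  -- (PA ⊗ PB) ψ = ψ
  have hPψ : (PA ⊗ₖ (1 : Matrix (Fin S.dB) (Fin S.dB) ℂ)) *ᵥ S.ψ = S.ψ := by
    funext ij
    obtain ⟨i, j⟩ := ij
    rw [kron_mulVec_left]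
    exact congrFun (hPAfix _ (hcolA j)) i
  have hQψ : ((1 : Matrix (Fin S.dA) (Fin S.dA) ℂ) ⊗ₖ PB) *ᵥ S.ψ = S.ψ := by
    funext ij
    obtain ⟨i, j⟩ := ij
    rw [kron_mulVec_right]
    exact congrFun (hPBfix _ (hcolB i)) j
  have hPQψ : (PA ⊗ₖ PB) *ᵥ S.ψ = S.ψ := by
    have e1 : PA ⊗ₖ PB = (PA ⊗ₖ (1 : Matrix (Fin S.dB) (Fin S.dB) ℂ))
        * ((1 : Matrix (Fin S.dA) (Fin S.dA) ℂ) ⊗ₖ PB) := by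
      rw [← mul_kronecker_mul, Matrix.mul_one, Matrix.one_mul]
    rw [e1, ← mulVec_mulVec, hQψ, hPψ]
  -- the new measurements
  set Mn : X → A → Matrix (Fin S.dA) (Fin S.dA) ℂ :=
    fun x a => PA * S.M x a * PA + if a = a₀ then 1 - PA else 0 with hMn
  set Nn : X → A → Matrix (Fin S.dB) (Fin S.dB) ℂ :=
    fun x a => PB * S.N x a * PB + if a = a₀ then 1 - PB else 0 with hNn
  have hblockA : ∀ x a, PA * S.M x a * PA = S.M x a * PA := by
    intro x a
    rw [hcommA, Matrix.mul_assoc, hPAP]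
  have hblockB : ∀ x a, PB * S.N x a * PB = S.N x a * PB := by
    intro x a
    rw [hcommB, Matrix.mul_assoc, hPBP]
  have h1subA : ((1 : Matrix (Fin S.dA) (Fin S.dA) ℂ) - PA)ᴴ = 1 - PA := by
    rw [Matrix.conjTranspose_sub, Matrix.conjTranspose_one, hPAh]
  have h1subA2 : ((1 : Matrix (Fin S.dA) (Fin S.dA) ℂ) - PA) * (1 - PA) = 1 - PA := by
    rw [Matrix.sub_mul, Matrix.one_mul, Matrix.mul_sub, Matrix.mul_one, hPAP]
    abel
  have h1subB : ((1 : Matrix (Fin S.dB) (Fin S.dB) ℂ) - PB)ᴴ = 1 - PB := by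
    rw [Matrix.conjTranspose_sub, Matrix.conjTranspose_one, hPBh]
  have h1subB2 : ((1 : Matrix (Fin S.dB) (Fin S.dB) ℂ) - PB) * (1 - PB) = 1 - PB := by
    rw [Matrix.sub_mul, Matrix.one_mul, Matrix.mul_sub, Matrix.mul_one, hPBP]
    abel
  -- Mn is a POVM of projections
  have hMnpos : ∀ x a, (Mn x a).PosSemidef := by
    intro x a
    have hp1 : (PA * S.M x a * PA).PosSemidef := by
      have := (S.M_pos x a).conjTranspose_mul_mul_same PA
      rwa [hPAh] at this
    by_cases h : a = a₀
    · simp only [hMn]; rw [if_pos h]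
      exact hp1.add (psd_of_proj h1subA h1subA2)
    · simp only [hMn]; rw [if_neg h, add_zero]
      exact hp1
  have hNnpos : ∀ x a, (Nn x a).PosSemidef := by
    intro x a
    have hp1 : (PB * S.N x a * PB).PosSemidef := by
      have := (S.N_pos x a).conjTranspose_mul_mul_same PB
      rwa [hPBh] at this
    by_cases h : a = a₀
    · simp only [hNn]; rw [if_pos h]
      exact hp1.add (psd_of_proj h1subB h1subB2)
    · simp only [hNn]; rw [if_neg h, add_zero]
      exact hp1
  have hMnsum : ∀ x, ∑ a, Mn x a = 1 := by
    intro x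
    simp only [hMn]
    rw [Finset.sum_add_distrib]
    have e1 : ∑ a, PA * S.M x a * PA = PA := by
      rw [← Finset.sum_mul, ← Finset.mul_sum, S.M_sum x, Matrix.mul_one, hPAP]
    have e2 : (∑ a, if a = a₀ then (1 : Matrix (Fin S.dA) (Fin S.dA) ℂ) - PA else 0)
        = 1 - PA := by
      rw [Finset.sum_ite_eq' Finset.univ a₀ fun _ => (1 : Matrix (Fin S.dA) (Fin S.dA) ℂ) - PA]
      simp
    rw [e1, e2]
    abel
  have hNnsum : ∀ x, ∑ a, Nn x a = 1 := by
    intro x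
    simp only [hNn]
    rw [Finset.sum_add_distrib]
    have e1 : ∑ a, PB * S.N x a * PB = PB := by
      rw [← Finset.sum_mul, ← Finset.mul_sum, S.N_sum x, Matrix.mul_one, hPBP]
    have e2 : (∑ a, if a = a₀ then (1 : Matrix (Fin S.dB) (Fin S.dB) ℂ) - PB else 0)
        = 1 - PB := by
      rw [Finset.sum_ite_eq' Finset.univ a₀ fun _ => (1 : Matrix (Fin S.dB) (Fin S.dB) ℂ) - PB]
      simp
    rw [e1, e2]
    abel
  set S' : QModel X X A A :=
    ⟨S.dA, S.dB, Mn, Nn, S.ψ, hMnpos, hMnsum, hNnpos, hNnsum, S.ψ_unit⟩ with hS'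
  -- auxiliary multiplicative identities
  have hMsqP : ∀ x a, S.M x a * S.M x a * PA = S.M x a * PA := by
    intro x a
    have := hMP x a
    rw [Matrix.sub_mul, sub_eq_zero] at this
    rw [this]
  have hNsqP : ∀ x a, S.N x a * S.N x a * PB = S.N x a * PB := by
    intro x a
    have := hNP x a
    rw [Matrix.sub_mul, sub_eq_zero] at this
    rw [this]
  have hPMP : ∀ x a, PA * (S.M x a * PA) = S.M x a * PA := by
    intro x a
    rw [← Matrix.mul_assoc, hblockA]
  have hPNP : ∀ x a, PB * (S.N x a * PB) = S.N x a * PB := by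
    intro x a
    rw [← Matrix.mul_assoc, hblockB]
  have hMPMP : ∀ x a, (S.M x a * PA) * (S.M x a * PA) = S.M x a * PA := by
    intro x a
    rw [Matrix.mul_assoc, hPMP, ← Matrix.mul_assoc, hMsqP]
  have hNPNP : ∀ x a, (S.N x a * PB) * (S.N x a * PB) = S.N x a * PB := by
    intro x a
    rw [Matrix.mul_assoc, hPNP, ← Matrix.mul_assoc, hNsqP]
  -- Projectivity
  have hproj : Projective S' := by
    constructor
    · intro x a
      constructor
      · show (Mn x a)ᴴ = Mn x a
        simp only [hMn]
        by_cases h : a = a₀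
        · rw [if_pos h]
          simp [Matrix.conjTranspose_add, Matrix.conjTranspose_mul, hPAh,
            (S.M_pos x a).isHermitian.eq, h1subA, Matrix.mul_assoc]
        · rw [if_neg h, add_zero]
          simp [Matrix.conjTranspose_mul, hPAh, (S.M_pos x a).isHermitian.eq,
            Matrix.mul_assoc]
      · show Mn x a * Mn x a = Mn x a
        have hcross1 : (S.M x a * PA) * ((1 : Matrix (Fin S.dA) (Fin S.dA) ℂ) - PA) = 0 := by
          rw [Matrix.mul_sub, Matrix.mul_one, Matrix.mul_assoc, hPAP, sub_self]
        have hcross2 : ((1 : Matrix (Fin S.dA) (Fin S.dA) ℂ) - PA) * (S.M x a * PA) = 0 := by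
          rw [Matrix.sub_mul, Matrix.one_mul, hPMP, sub_self]
        simp only [hMn, hblockA]
        by_cases h : a = a₀
        · rw [if_pos h, Matrix.add_mul, Matrix.mul_add, Matrix.mul_add, hMPMP, hcross1, hcross2,
            h1subA2, add_zero, zero_add]
        · rw [if_neg h, add_zero]
          exact hMPMP x a
    · intro x a
      constructor
      · show (Nn x a)ᴴ = Nn x a
        simp only [hNn]
        by_cases h : a = a₀
        · rw [if_pos h]
          simp [Matrix.conjTranspose_add, Matrix.conjTranspose_mul, hPBh,
            (S.N_pos x a).isHermitian.eq, h1subB, Matrix.mul_assoc]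
        · rw [if_neg h, add_zero]
          simp [Matrix.conjTranspose_mul, hPBh, (S.N_pos x a).isHermitian.eq,
            Matrix.mul_assoc]
      · show Nn x a * Nn x a = Nn x a
        have hcross1 : (S.N x a * PB) * ((1 : Matrix (Fin S.dB) (Fin S.dB) ℂ) - PB) = 0 := by
          rw [Matrix.mul_sub, Matrix.mul_one, Matrix.mul_assoc, hPBP, sub_self]
        have hcross2 : ((1 : Matrix (Fin S.dB) (Fin S.dB) ℂ) - PB) * (S.N x a * PB) = 0 := by
          rw [Matrix.sub_mul, Matrix.one_mul, hPNP, sub_self]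
        simp only [hNn, hblockB]
        by_cases h : a = a₀
        · rw [if_pos h, Matrix.add_mul, Matrix.mul_add, Matrix.mul_add, hNPNP, hcross1, hcross2,
            h1subB2, add_zero, zero_add]
        · rw [if_neg h, add_zero]
          exact hNPNP x a
  -- word identities
  have hMnP : ∀ x a, Mn x a * PA = S.M x a * PA := by
    intro x a
    simp only [hMn]
    rw [Matrix.add_mul, hblockA]
    have : (if a = a₀ then (1 : Matrix (Fin S.dA) (Fin S.dA) ℂ) - PA else 0) * PA = 0 := by
      by_cases h : a = a₀
      · rw [if_pos h, Matrix.sub_mul, Matrix.one_mul, hPAP, sub_self]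
      · rw [if_neg h, Matrix.zero_mul]
    rw [Matrix.mul_assoc, hPAP, this, add_zero]
  have hNnP : ∀ x a, Nn x a * PB = S.N x a * PB := by
    intro x a
    simp only [hNn]
    rw [Matrix.add_mul, hblockB]
    have : (if a = a₀ then (1 : Matrix (Fin S.dB) (Fin S.dB) ℂ) - PB else 0) * PB = 0 := by
      by_cases h : a = a₀
      · rw [if_pos h, Matrix.sub_mul, Matrix.one_mul, hPBP, sub_self]
      · rw [if_neg h, Matrix.zero_mul]
    rw [Matrix.mul_assoc, hPBP, this, add_zero]
  have hPprodA : ∀ wA : List (X × A),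
      PA * (wA.map fun q => S.M q.1 q.2).prod = (wA.map fun q => S.M q.1 q.2).prod * PA := by
    intro wA
    induction wA with
    | nil => simp
    | cons q t ih =>
      simp only [List.map_cons, List.prod_cons]
      rw [← Matrix.mul_assoc, hcommA, Matrix.mul_assoc, ih, ← Matrix.mul_assoc]
  have hPprodB : ∀ wB : List (X × A),
      PB * (wB.map fun q => S.N q.1 q.2).prod = (wB.map fun q => S.N q.1 q.2).prod * PB := by
    intro wB
    induction wB with
    | nil => simp
    | cons q t ih =>
      simp only [List.map_cons, List.prod_cons]
      rw [← Matrix.mul_assoc, hcommB, Matrix.mul_assoc, ih, ← Matrix.mul_assoc]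
  have hwordA : ∀ wA : List (X × A),
      (wA.map fun q => Mn q.1 q.2).prod * PA = (wA.map fun q => S.M q.1 q.2).prod * PA := by
    intro wA
    induction wA with
    | nil => rfl
    | cons q t ih =>
      simp only [List.map_cons, List.prod_cons]
      rw [Matrix.mul_assoc, ih, ← hPprodA t, ← Matrix.mul_assoc, hMnP, Matrix.mul_assoc,
        hPprodA t, ← Matrix.mul_assoc]
  have hwordB : ∀ wB : List (X × A),
      (wB.map fun q => Nn q.1 q.2).prod * PB = (wB.map fun q => S.N q.1 q.2).prod * PB := by
    intro wB
    induction wB with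
    | nil => rfl
    | cons q t ih =>
      simp only [List.map_cons, List.prod_cons]
      rw [Matrix.mul_assoc, ih, ← hPprodB t, ← Matrix.mul_assoc, hNnP, Matrix.mul_assoc,
        hPprodB t, ← Matrix.mul_assoc]
  have hSS : SameState S S' := by
    intro wA wB
    show qInner S.ψ _ = qInner S.ψ _
    congr 1
    conv_lhs => rw [← hPQψ, mulVec_mulVec, ← mul_kronecker_mul]
    conv_rhs => rw [← hPQψ, mulVec_mulVec, ← mul_kronecker_mul]
    rw [hwordA wA, hwordB wB]
  have hre' : Realizes S' p := by
    intro a b x y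
    have h1 := hSS [(x, a)] [(y, b)]
    simp only [wordValue, List.map_cons, List.map_nil, List.prod_cons, List.prod_nil,
      Matrix.mul_one] at h1
    rw [← h1]
    exact hre a b x y
  exact ⟨S', hproj, hre', hSS⟩

end Main

/-- For a synchronous quantum correlation `p`, the abstract state of any model
for `p` is projective, and hence `p` is an abstract state self-test for all models iff it is
one for projective models. -/
theorem statement17 {X A : Type} [Fintype A]
    (p : A → A → X → X → ℝ)
    (hp : p ∈ CqSet X X A A)
    (hsync : ∀ (x : X) (a b : A), a ≠ b → p a b x x = 0) :
    (∀ S : QModel X X A A, Realizes S p →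
      ∃ S' : QModel X X A A, Projective S' ∧ Realizes S' p ∧ SameState S S')
    ∧ ((∀ S S' : QModel X X A A, Realizes S p → Realizes S' p → SameState S S') ↔
       (∀ S S' : QModel X X A A, Projective S → Projective S' →
          Realizes S p → Realizes S' p → SameState S S')) := by
  constructor
  · intro S hre
    exact exists_projective_model p hsync S hre
  · constructor
    · intro h S S' _ _ hre hre'
      exact h S S' hre hre'
    · intro h S S' hre hre'
      obtain ⟨T, hTproj, hTre, hST⟩ := exists_projective_model p hsync S hre
      obtain ⟨T', hT'proj, hT're, hS'T'⟩ := exists_projective_model p hsync S' hre'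
      intro wA wB
      rw [hST wA wB, h T T' hTproj hT'proj hTre hT're wA wB, ← hS'T' wA wB]


end SelfTestPaper
end
end
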